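/- arXiv:1403.0022 — 2 statements merged into one kernel-verified Lean document; each statement's English description precedes it below -/
import Mathlib

section
/- Let v_θ(r) = r^α for α ∈ (0,1). The vector field v(x,y,z) = r^{α-1}(-y, x, 0), where r = √(x²+y²), extended by 0 at the origin, is α-Hölder continuous on the closed unit ball of ℝ³. -/
private lemma rpow_mul_self_eq {α : ℝ} (h0 : 0 < α) (h1 : α < 1) {t : ℝ} (ht : 0 ≤ t) :
    t ^ (α - 1) * t = t ^ α := by
  rcases ht.eq_or_lt with h | h
  · rw [← h, Real.zero_rpow (by linarith), Real.zero_rpow (by linarith), mul_zero]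
  · rw [← Real.rpow_add_one h.ne' (α - 1), sub_add_cancel]

private lemma key_aux {E : Type*} [NormedAddCommGroup E] [NormedSpace ℝ E] {α : ℝ}
    (h0 : 0 < α) (h1 : α < 1) (u v : E) (hba : ‖v‖ ≤ ‖u‖) :
    ‖(‖u‖ ^ (α - 1)) • u - (‖v‖ ^ (α - 1)) • v‖ ≤ 2 * ‖u - v‖ ^ α := by
  set a := ‖u‖ with ha_def
  set b := ‖v‖ with hb_def
  set d := ‖u - v‖ with hd_def
  have ha : 0 ≤ a := norm_nonneg u
  have hb : 0 ≤ b := norm_nonneg v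
  have hd : 0 ≤ d := norm_nonneg _
  have hβ : α - 1 ≤ 0 := by linarith
  have hab : a - b ≤ d := norm_sub_norm_le u v
  rcases hd.eq_or_lt with hd0 | hd0
  · -- d = 0, so u = v
    have huv : u = v := sub_eq_zero.mp (norm_eq_zero.mp hd0.symm)
    subst huv
    simp [Real.zero_rpow h0.ne']
    simp [ha_def, hb_def, hd_def, Real.zero_rpow h0.ne']
  · rcases le_or_gt a d with had | had
    · -- a ≤ d : use triangle inequality directly
      have h1' : ‖(a ^ (α - 1)) • u - (b ^ (α - 1)) • v‖ ≤
          ‖(a ^ (α - 1)) • u‖ + ‖(b ^ (α - 1)) • v‖ := norm_sub_le _ _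
      have h2 : ‖(a ^ (α - 1)) • u‖ = a ^ α := by
        rw [norm_smul, Real.norm_of_nonneg (Real.rpow_nonneg ha _), ← ha_def,
          rpow_mul_self_eq h0 h1 ha]
      have h3 : ‖(b ^ (α - 1)) • v‖ = b ^ α := by
        rw [norm_smul, Real.norm_of_nonneg (Real.rpow_nonneg hb _), ← hb_def,
          rpow_mul_self_eq h0 h1 hb]
      have h4 : a ^ α ≤ d ^ α := Real.rpow_le_rpow ha had h0.le
      have h5 : b ^ α ≤ d ^ α := Real.rpow_le_rpow hb (hba.trans had) h0.le
      rw [h2, h3] at h1'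
      linarith
    · -- d < a
      have ha0 : 0 < a := hd0.trans had
      have hb0 : 0 < b := by
        rcases hb.eq_or_lt with h | h
        · exfalso
          have hv : v = 0 := norm_eq_zero.mp h.symm
          rw [hv, sub_zero] at hd_def
          rw [hd_def] at had
          exact absurd had (lt_irrefl _)
        · exact h
      have hadβ : a ^ (α - 1) ≤ d ^ (α - 1) :=
        Real.rpow_le_rpow_of_nonpos hd0 had.le hβ
      have habβ : a ^ (α - 1) ≤ b ^ (α - 1) :=
        Real.rpow_le_rpow_of_nonpos hb0 hba hβ
      have tri : ‖(a ^ (α - 1)) • u - (b ^ (α - 1)) • v‖ ≤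
          ‖(a ^ (α - 1)) • u - (a ^ (α - 1)) • v‖ +
          ‖(a ^ (α - 1)) • v - (b ^ (α - 1)) • v‖ := by
        have := norm_add_le ((a ^ (α - 1)) • u - (a ^ (α - 1)) • v)
          ((a ^ (α - 1)) • v - (b ^ (α - 1)) • v)
        simpa [sub_add_sub_cancel] using this
      have term1 : ‖(a ^ (α - 1)) • u - (a ^ (α - 1)) • v‖ = a ^ (α - 1) * d := by
        rw [← smul_sub, norm_smul, Real.norm_of_nonneg (Real.rpow_nonneg ha _), ← hd_def]
      have term2 : ‖(a ^ (α - 1)) • v - (b ^ (α - 1)) • v‖ = (b ^ (α - 1) - a ^ (α - 1)) * b := by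
        rw [← sub_smul, norm_smul, Real.norm_eq_abs, abs_of_nonpos (by linarith), ← hb_def]
        ring
      -- key estimates
      have e1 : a ^ (α - 1) * a = a ^ α := rpow_mul_self_eq h0 h1 ha
      have e2 : b ^ (α - 1) * b = b ^ α := rpow_mul_self_eq h0 h1 hb
      have e3 : d ^ (α - 1) * d = d ^ α := rpow_mul_self_eq h0 h1 hd
      have e4 : b ^ α ≤ a ^ α := Real.rpow_le_rpow hb hba h0.le
      have e5 : 0 ≤ a ^ (α - 1) := Real.rpow_nonneg ha _
      have bound1 : a ^ (α - 1) * d ≤ d ^ α := by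
        rw [← e3]
        exact mul_le_mul_of_nonneg_right hadβ hd
      have bound2 : (b ^ (α - 1) - a ^ (α - 1)) * b ≤ d ^ α := by
        have : (b ^ (α - 1) - a ^ (α - 1)) * b = b ^ α - a ^ (α - 1) * b := by
          rw [sub_mul, e2]
        rw [this]
        have h6 : b ^ α - a ^ (α - 1) * b ≤ a ^ (α - 1) * (a - b) := by
          have : a ^ (α - 1) * (a - b) = a ^ α - a ^ (α - 1) * b := by
            rw [mul_sub, e1]
          linarith
        have h7 : a ^ (α - 1) * (a - b) ≤ a ^ (α - 1) * d :=
          mul_le_mul_of_nonneg_left hab e5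
        linarith
      calc ‖(a ^ (α - 1)) • u - (b ^ (α - 1)) • v‖
          ≤ a ^ (α - 1) * d + (b ^ (α - 1) - a ^ (α - 1)) * b := by
            rw [← term1, ← term2]; exact tri
        _ ≤ d ^ α + d ^ α := add_le_add bound1 bound2
        _ = 2 * d ^ α := by ring

private lemma key_lemma {E : Type*} [NormedAddCommGroup E] [NormedSpace ℝ E] {α : ℝ}
    (h0 : 0 < α) (h1 : α < 1) (u v : E) :
    ‖(‖u‖ ^ (α - 1)) • u - (‖v‖ ^ (α - 1)) • v‖ ≤ 2 * ‖u - v‖ ^ α := by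
  rcases le_total ‖v‖ ‖u‖ with h | h
  · exact key_aux h0 h1 u v h
  · rw [norm_sub_rev, norm_sub_rev u v]
    exact key_aux h0 h1 v u h

/-- The vector field `v(x,y,z) = r^{α-1}(-y, x, 0)`, `r = √(x²+y²)`,
extended by `0` on the z-axis (automatic, since `0 ^ (α-1) = 0` for `α - 1 ≠ 0`). -/
noncomputable def vField (α : ℝ) (p : EuclideanSpace ℝ (Fin 3)) : EuclideanSpace ℝ (Fin 3) :=
  WithLp.toLp 2 ![-(p 1) * Real.sqrt ((p 0) ^ 2 + (p 1) ^ 2) ^ (α - 1),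
    (p 0) * Real.sqrt ((p 0) ^ 2 + (p 1) ^ 2) ^ (α - 1),
    0]

/-- `v` is `α`-Hölder continuous on the closed unit ball of `ℝ³`. -/
theorem vField_holder_on_unit_ball (α : ℝ) (hα : α ∈ Set.Ioo (0 : ℝ) 1) :
    ∃ C : ℝ, ∀ p q : EuclideanSpace ℝ (Fin 3), ‖p‖ ≤ 1 → ‖q‖ ≤ 1 →
      ‖vField α p - vField α q‖ ≤ C * ‖p - q‖ ^ α := by
  obtain ⟨h0, h1⟩ := hα
  refine ⟨2, fun p q _ _ => ?_⟩
  set up : EuclideanSpace ℝ (Fin 2) := WithLp.toLp 2 ![p 0, p 1] with hup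
  set uq : EuclideanSpace ℝ (Fin 2) := WithLp.toLp 2 ![q 0, q 1] with huq
  have hnup : ‖up‖ = Real.sqrt ((p 0) ^ 2 + (p 1) ^ 2) := by
    rw [EuclideanSpace.norm_eq, Fin.sum_univ_two]
    simp [hup, Real.norm_eq_abs, sq_abs]
  have hnuq : ‖uq‖ = Real.sqrt ((q 0) ^ 2 + (q 1) ^ 2) := by
    rw [EuclideanSpace.norm_eq, Fin.sum_univ_two]
    simp [huq, Real.norm_eq_abs, sq_abs]
  have hEq : ‖vField α p - vField α q‖ =
      ‖(‖up‖ ^ (α - 1)) • up - (‖uq‖ ^ (α - 1)) • uq‖ := by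
    rw [EuclideanSpace.norm_eq, EuclideanSpace.norm_eq, Fin.sum_univ_three, Fin.sum_univ_two,
      hnup, hnuq]
    simp only [vField, hup, huq, PiLp.sub_apply, PiLp.smul_apply, Matrix.cons_val_zero,
      Matrix.cons_val_one, Matrix.head_cons, Matrix.cons_val_two, Matrix.tail_cons,
      Real.norm_eq_abs, sq_abs, smul_eq_mul]
    congr 1
    ring
  have hle : ‖up - uq‖ ≤ ‖p - q‖ := by
    rw [EuclideanSpace.norm_eq, EuclideanSpace.norm_eq, Fin.sum_univ_three, Fin.sum_univ_two]
    apply Real.sqrt_le_sqrt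
    simp only [hup, huq, PiLp.sub_apply, Matrix.cons_val_zero, Matrix.cons_val_one,
      Matrix.head_cons, Real.norm_eq_abs, sq_abs]
    nlinarith [sq_nonneg (p 2 - q 2)]
  calc ‖vField α p - vField α q‖
      = ‖(‖up‖ ^ (α - 1)) • up - (‖uq‖ ^ (α - 1)) • uq‖ := hEq
    _ ≤ 2 * ‖up - uq‖ ^ α := key_lemma h0 h1 up uq
    _ ≤ 2 * ‖p - q‖ ^ α := by
        have := Real.rpow_le_rpow (norm_nonneg _) hle h0.le
        linarith
end

section
/- Let α ∈ (0,1), t > 0, and suppose B_r⁰(r,θ,z) ≥ c > 0 for all arguments and B_θ⁰ is bounded. Then B_θ(t,r,θ,z) = B_θ⁰(r, θ − r^{α−1}t, z) − (1−α) r^{α−1} t B_r⁰(r, θ − r^{α−1}t, z) satisfies lim_{r→0⁺} |B_θ(t,r,θ,z)| = +∞ for every fixed θ, z. -/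
/-- Blow-up of the angular component: if `B_r⁰ ≥ c > 0` and `B_θ⁰` is bounded, then
`|B_θ(t,r,θ,z)| → +∞` as `r → 0⁺`, for every fixed `t > 0, θ, z`. -/
theorem angular_component_blowup (α : ℝ) (hα : α ∈ Set.Ioo (0 : ℝ) 1)
    (t : ℝ) (ht : 0 < t)
    (B0r B0θ : ℝ → ℝ → ℝ → ℝ) (c M : ℝ) (hc : 0 < c)
    (hB0r : ∀ r θ z, c ≤ B0r r θ z)
    (hB0θ : ∀ r θ z, |B0θ r θ z| ≤ M)
    (θ z : ℝ) :
    Filter.Tendsto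
      (fun r : ℝ =>
        |B0θ r (θ - r ^ (α - 1) * t) z
          - (1 - α) * r ^ (α - 1) * t * B0r r (θ - r ^ (α - 1) * t) z|)
      (nhdsWithin 0 (Set.Ioi 0)) Filter.atTop := by
  obtain ⟨hα0, hα1⟩ := hα
  have h1α : (0:ℝ) < 1 - α := by linarith
  -- r ^ (α - 1) → ∞ as r → 0⁺
  have hrpow : Filter.Tendsto (fun r : ℝ => r ^ (α - 1))
      (nhdsWithin 0 (Set.Ioi 0)) Filter.atTop := by
    have h1 : Filter.Tendsto (fun r : ℝ => r⁻¹) (nhdsWithin 0 (Set.Ioi 0))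
        Filter.atTop := tendsto_inv_nhdsGT_zero
    have h2 : Filter.Tendsto (fun x : ℝ => x ^ (1 - α)) Filter.atTop
        Filter.atTop := tendsto_rpow_atTop h1α
    have h3 := h2.comp h1
    refine h3.congr' ?_
    filter_upwards [self_mem_nhdsWithin] with r hr
    have hr' : (0:ℝ) < r := hr
    simp only [Function.comp]
    rw [Real.inv_rpow hr'.le, ← Real.rpow_neg hr'.le]
    ring_nf
  -- lower bound function tends to atTop
  have hg : Filter.Tendsto (fun r : ℝ => (1 - α) * r ^ (α - 1) * t * c - M)
      (nhdsWithin 0 (Set.Ioi 0)) Filter.atTop := by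
    have := (hrpow.const_mul_atTop h1α).atTop_mul_const ht
    have := this.atTop_mul_const hc
    exact Filter.tendsto_atTop_add_const_right _ (-M) this |>.congr (by
      intro r; ring)
  refine Filter.tendsto_atTop_mono' _ ?_ hg
  filter_upwards [self_mem_nhdsWithin] with r hr
  have hr' : (0:ℝ) < r := hr
  have hpow : (0:ℝ) < r ^ (α - 1) := Real.rpow_pos_of_pos hr' _
  set a := B0θ r (θ - r ^ (α - 1) * t) z
  set b := B0r r (θ - r ^ (α - 1) * t) z
  have hb : c ≤ b := hB0r r (θ - r ^ (α - 1) * t) z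
  have hK : (1 - α) * r ^ (α - 1) * t * c ≤ (1 - α) * r ^ (α - 1) * t * b := by
    apply mul_le_mul_of_nonneg_left hb
    positivity
  have habs : |(1 - α) * r ^ (α - 1) * t * b| - |a| ≤ |a - (1 - α) * r ^ (α - 1) * t * b| := by
    have := abs_sub_abs_le_abs_sub ((1 - α) * r ^ (α - 1) * t * b) a
    rw [abs_sub_comm] at this
    linarith
  have hbpos : (0:ℝ) ≤ (1 - α) * r ^ (α - 1) * t * b := by
    have : (0:ℝ) ≤ (1 - α) * r ^ (α - 1) * t * c := by positivity
    linarith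
  rw [abs_of_nonneg hbpos] at habs
  have := hB0θ r (θ - r ^ (α - 1) * t) z
  linarith
end
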